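/- arXiv:2009.03996 — 2 statements merged into one kernel-verified Lean document; each statement's English description precedes it below -/
import Mathlib

section
/- If R ⊆ ℕ is a computably enumerable set and A ⊆ ℕ is bi-immune, then the symmetric difference A Δ R = (A \ R) ∪ (R \ A) is bi-immune. -/
/-- A set `A ⊆ ℕ` is immune: `A` is infinite and every infinite c.e. set
meets the complement of `A` (equivalently, `A` has no infinite c.e. subset). -/
def Immune (A : Set ℕ) : Prop :=
  A.Infinite ∧ ∀ R : Set ℕ, REPred (· ∈ R) → R.Infinite → (R ∩ Aᶜ).Nonempty

/-- A set is bi-immune if both it and its complement are immune. -/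
def BiImmune (A : Set ℕ) : Prop :=
  Immune A ∧ Immune Aᶜ

theorem rePred_and {p q : ℕ → Prop} (hp : REPred p) (hq : REPred q) :
    REPred fun a => p a ∧ q a := by
  have h : Partrec fun a : ℕ =>
      (Part.assert (p a) fun _ => Part.some ()).bind fun _ =>
        Part.assert (q a) fun _ => Part.some () :=
    hp.bind (hq.comp Computable.fst)
  exact h.dom_re.of_eq (by intro a; simp [Part.assert])

theorem primrec_mem_list (l : List ℕ) : PrimrecPred (fun x => x ∈ l) := by
  induction l with
  | nil => refine PrimrecPred.of_eq (p := fun _ : ℕ => False) (Primrec.primrecPred (Primrec.const false)) fun n => ?_; simp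
  | cons a l ih =>
      have h1 : PrimrecPred fun x : ℕ => x = a := Primrec.eq.comp Primrec.id (Primrec.const a)
      exact (h1.or ih).of_eq (by intro x; simp [List.mem_cons])

theorem computablePred_mem_finite {F : Set ℕ} (hF : F.Finite) : ComputablePred (· ∈ F) := by
  have h : ComputablePred (fun x => x ∈ hF.toFinset.toList) :=
    (primrec_mem_list hF.toFinset.toList).computablePred
  exact h.of_eq (by intro a; simp)

/-- removing a finite set from a c.e. set keeps it c.e. -/
theorem rePred_diff_finite {W F : Set ℕ} (hW : REPred (· ∈ W)) (hF : F.Finite) :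
    REPred (fun x => x ∈ W ∧ x ∉ F) :=
  rePred_and hW ((computablePred_mem_finite hF).not.to_re)

/-- Key splitting lemma: no infinite c.e. set `W` can have `W ∩ R ⊆ Bᶜ` and
`W \ R ⊆ B` when both `B` and `Bᶜ` are immune and `R` is c.e. -/
theorem aux_split {R W B : Set ℕ} (hR : REPred (· ∈ R)) (hW : REPred (· ∈ W))
    (hWinf : W.Infinite) (hB : Immune B) (hBc : Immune Bᶜ)
    (h1 : W ∩ R ⊆ Bᶜ) (h2 : W \ R ⊆ B) : False := by
  have hWR : REPred (· ∈ W ∩ R) := rePred_and hW hR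
  by_cases hinf : (W ∩ R).Infinite
  · obtain ⟨x, hx1, hx2⟩ := hBc.2 (W ∩ R) hWR hinf
    exact hx2 (h1 hx1)
  · have hFin : (W ∩ R).Finite := Set.not_infinite.mp hinf
    have hW2 : REPred (· ∈ W \ (W ∩ R)) := rePred_diff_finite hW hFin
    have hinf2 : (W \ (W ∩ R)).Infinite := hWinf.diff hFin
    obtain ⟨x, hx1, hx2⟩ := hB.2 _ hW2 hinf2
    have hxR : x ∉ R := fun hxR => hx1.2 ⟨hx1.1, hxR⟩
    exact hx2 (h2 ⟨hx1.1, hxR⟩)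

/-- If `R` is c.e. and `A` is bi-immune, then the symmetric difference
`A Δ R = (A \ R) ∪ (R \ A)` is bi-immune. -/
theorem biImmune_symmDiff (A R : Set ℕ) (hR : REPred (· ∈ R)) (hA : BiImmune A) :
    BiImmune ((A \ R) ∪ (R \ A)) := by
  obtain ⟨⟨hAinf, hAim⟩, hAcinf, hAcim⟩ := hA
  set S : Set ℕ := (A \ R) ∪ (R \ A) with hS
  -- S is infinite
  have hSinf : S.Infinite := by
    by_contra hfin
    rw [Set.not_infinite] at hfin
    have h1 : (A \ R).Finite := hfin.subset Set.subset_union_left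
    have h2 : (R \ A).Finite := hfin.subset Set.subset_union_right
    have hAR : (A \ (A \ R)).Infinite := hAinf.diff h1
    have hRinf : R.Infinite := hAR.mono (fun x hx => by
      by_contra hxR; exact hx.2 ⟨hx.1, hxR⟩)
    have hW : REPred (· ∈ R \ (R \ A)) := rePred_diff_finite hR h2
    obtain ⟨x, hx1, hx2⟩ := hAim _ hW (hRinf.diff h2)
    have : x ∈ A := by by_contra hxA; exact hx1.2 ⟨hx1.1, hxA⟩
    exact hx2 this
  -- Sᶜ is infinite
  have hScinf : Sᶜ.Infinite := by
    by_contra hfin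
    rw [Set.not_infinite] at hfin
    have h1 : (A ∩ R).Finite := hfin.subset (fun x hx hxS => by
      rcases hxS with h | h
      · exact h.2 hx.2
      · exact h.2 hx.1)
    have hAcR : (Aᶜ \ Rᶜ).Infinite := by
      have h2 : (Aᶜ ∩ Rᶜ).Finite := hfin.subset (fun x hx hxS => by
        rcases hxS with h | h
        · exact hx.1 h.1
        · exact hx.2 h.1)
      have := hAcinf.diff h2
      refine this.mono (fun x hx => ⟨hx.1, fun hxRc => hx.2 ⟨hx.1, hxRc⟩⟩)
    have hRinf : R.Infinite := hAcR.mono (fun x hx => by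
      by_contra hxR; exact hx.2 hxR)
    have hW : REPred (· ∈ R \ (A ∩ R)) := rePred_diff_finite hR h1
    obtain ⟨x, hx1, hx2⟩ := hAcim _ hW (hRinf.diff h1)
    have hxA : x ∉ A := fun hxA => hx1.2 ⟨hxA, hx1.1⟩
    rw [compl_compl] at hx2
    exact hxA hx2
  constructor
  · refine ⟨hSinf, fun W hW hWinf => ?_⟩
    by_contra hne
    rw [Set.not_nonempty_iff_eq_empty] at hne
    have hsub : W ⊆ S := fun x hx => by
      by_contra hxS
      exact absurd (hne ▸ (⟨hx, hxS⟩ : x ∈ W ∩ Sᶜ)) (Set.notMem_empty x)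
    refine aux_split hR hW hWinf ⟨hAinf, hAim⟩ ⟨hAcinf, hAcim⟩ ?_ ?_
    · intro x hx
      rcases hsub hx.1 with h | h
      · exact absurd hx.2 h.2
      · exact h.2
    · intro x hx
      rcases hsub hx.1 with h | h
      · exact h.1
      · exact absurd h.1 hx.2
  · refine ⟨hScinf, fun W hW hWinf => ?_⟩
    by_contra hne
    rw [Set.not_nonempty_iff_eq_empty] at hne
    have hsub : W ⊆ Sᶜ := fun x hx => by
      by_contra hxS
      rw [Set.notMem_compl_iff] at hxS
      exact absurd (hne ▸ (⟨hx, by rwa [compl_compl]⟩ : x ∈ W ∩ Sᶜᶜ))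
        (Set.notMem_empty x)
    have hAcc : Immune Aᶜᶜ := by rw [compl_compl]; exact ⟨hAinf, hAim⟩
    refine aux_split hR hW hWinf ⟨hAcinf, hAcim⟩ hAcc ?_ ?_
    · intro x hx hxAc
      exact hsub hx.1 (Or.inr ⟨hx.2, hxAc⟩)
    · intro x hx hxA
      exact hsub hx.1 (Or.inl ⟨hxA, hx.2⟩)
end

section
/- The collection of bi-immune subsets of ℕ is uncountable; that is, the set {A : Set ℕ | A is bi-immune} is not countable. -/
open Nat.Partrec (Code)

theorem ce_countable : {R : Set ℕ | REPred (· ∈ R)}.Countable := by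
  rw [Set.countable_coe_iff.symm]
  have key : ∀ R : {R : Set ℕ | REPred (· ∈ R)}, ∃ c : Code,
      ∀ n, n ∈ (R : Set ℕ) ↔ (c.eval n).Dom := by
    rintro ⟨R, hR⟩
    have h1 : Partrec (fun a => (Part.assert (a ∈ R) fun _ => Part.some ()).map
        fun _ => 0) := hR.map (Computable.const 0).to₂
    obtain ⟨c, hc⟩ := Nat.Partrec.Code.exists_code.1 (Partrec.nat_iff.1 h1)
    refine ⟨c, fun n => ?_⟩
    rw [hc]; simp [Part.assert]
  choose F hF using key
  have hinj : Function.Injective F := by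
    rintro R S h; ext1; ext n; rw [hF R n, h, ← hF S n]
  exact hinj.countable

theorem univ_re : REPred (· ∈ (Set.univ : Set ℕ)) := by
  have : (fun a : ℕ => Part.assert (a ∈ (Set.univ : Set ℕ)) fun _ => Part.some ())
      = fun _ => Part.some () := by
    funext a; exact Part.ext fun x => by simp [Part.assert, Set.mem_univ]
  unfold REPred
  rw [this]
  exact Partrec.const' _

/-- The collection of bi-immune subsets of `ℕ` is uncountable. -/
theorem biImmune_uncountable : ¬ {A : Set ℕ | BiImmune A}.Countable := by
  intro hcount
  -- enumerate infinite c.e. sets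
  have hEc : {R : Set ℕ | REPred (· ∈ R) ∧ R.Infinite}.Countable :=
    ce_countable.mono fun R hR => hR.1
  have hEne : {R : Set ℕ | REPred (· ∈ R) ∧ R.Infinite}.Nonempty :=
    ⟨Set.univ, univ_re, Set.infinite_univ⟩
  obtain ⟨e, he⟩ := hEc.exists_eq_range hEne
  have heI : ∀ n, (e n).Infinite := fun n => by
    have : e n ∈ {R : Set ℕ | REPred (· ∈ R) ∧ R.Infinite} := he ▸ ⟨n, rfl⟩
    exact this.2
  -- recursive choice of witnesses
  have pick : ∀ n m, ∃ k ∈ e n, m < k := fun n m => (heI n).exists_gt m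
  choose p hp1 hp2 using pick
  -- g n = (a n, b n)
  let g : ℕ → ℕ × ℕ := fun n => Nat.rec
    (let a := p 0 0; (a, p 0 a))
    (fun n ih => let a := p (n+1) (ih.2 + 2); (a, p (n+1) a)) n
  set a : ℕ → ℕ := fun n => (g n).1 with ha
  set b : ℕ → ℕ := fun n => (g n).2 with hb
  set c : ℕ → ℕ := fun n => b n + 1 with hc
  have hmem_a : ∀ n, a n ∈ e n := by
    intro n; cases n with
    | zero => exact hp1 0 0
    | succ n => exact hp1 (n+1) _
  have hmem_b : ∀ n, b n ∈ e n := by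
    intro n; cases n with
    | zero => exact hp1 0 _
    | succ n => exact hp1 (n+1) _
  have hab : ∀ n, a n < b n := by
    intro n; cases n with
    | zero => exact hp2 0 _
    | succ n => exact hp2 (n+1) _
  have hca : ∀ n, c n < a (n+1) := by
    intro n
    have h1 : b n + 2 < a (n+1) := hp2 (n+1) _
    show b n + 1 < a (n+1)
    omega
  -- interleaved strict mono sequence
  let d : ℕ → ℕ := fun k =>
    if k % 3 = 0 then a (k / 3) else if k % 3 = 1 then b (k / 3) else c (k / 3)
  have hd : StrictMono d := by
    apply strictMono_nat_of_lt_succ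
    intro k
    have h3 : k % 3 = 0 ∨ k % 3 = 1 ∨ k % 3 = 2 := by omega
    rcases h3 with h | h | h
    · have h1 : (k+1) % 3 = 1 := by omega
      have h2 : (k+1) / 3 = k / 3 := by omega
      simp only [d, h, h1, h2]; simpa using hab (k / 3)
    · have h1 : (k+1) % 3 = 2 := by omega
      have h2 : (k+1) / 3 = k / 3 := by omega
      simp only [d, h, h1, h2]
      exact Nat.lt_succ_self _
    · have h1 : (k+1) % 3 = 0 := by omega
      have h2 : (k+1) / 3 = k / 3 + 1 := by omega
      simp only [d, h, h1, h2]
      exact hca (k / 3)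
  have da : ∀ n, d (3 * n) = a n := fun n => by simp [d, Nat.mul_div_cancel_left, Nat.mul_mod_right]
  have db : ∀ n, d (3 * n + 1) = b n := fun n => by
    have h1 : (3 * n + 1) % 3 = 1 := by omega
    have h2 : (3 * n + 1) / 3 = n := by omega
    simp [d, h1, h2]
  have dc : ∀ n, d (3 * n + 2) = c n := fun n => by
    have h1 : (3 * n + 2) % 3 = 2 := by omega
    have h2 : (3 * n + 2) / 3 = n := by omega
    simp [d, h1, h2]
  -- the family of bi-immune sets
  let A : Set ℕ → Set ℕ := fun S => Set.range a ∪ (c '' S)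
  have hb_not : ∀ S n, b n ∉ A S := by
    rintro S n (⟨m, hm⟩ | ⟨m, _, hm⟩)
    · rcases lt_trichotomy m n with h | h | h
      · exact absurd hm (by rw [← da, ← db]; exact (hd.lt_iff_lt.2 (by omega)).ne)
      · subst h; exact absurd hm (hab m).ne
      · exact absurd hm (by rw [← da, ← db]; exact (hd.lt_iff_lt.2 (by omega)).ne')
    · rcases lt_trichotomy m n with h | h | h
      · exact absurd hm (by rw [← dc, ← db]; exact (hd.lt_iff_lt.2 (by omega)).ne)
      · subst h; simp [hc] at hm
      · exact absurd hm (by rw [← dc, ← db]; exact (hd.lt_iff_lt.2 (by omega)).ne')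
  have hc_mem : ∀ S n, c n ∈ A S ↔ n ∈ S := by
    intro S n
    constructor
    · rintro (⟨m, hm⟩ | ⟨m, hmS, hm⟩)
      · exfalso
        rcases lt_trichotomy m n with h | h | h
        · exact absurd hm (by rw [← da, ← dc]; exact (hd.lt_iff_lt.2 (by omega)).ne)
        · subst h
          have h2 : c m = b m + 1 := rfl
          have := hab m; omega
        · exact absurd hm (by rw [← da, ← dc]; exact (hd.lt_iff_lt.2 (by omega)).ne')
      · have : m = n := by
          by_contra h
          rcases lt_or_gt_of_ne h with h | h
          · exact absurd hm (by rw [← dc, ← dc]; exact (hd.lt_iff_lt.2 (by omega)).ne)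
          · exact absurd hm (by rw [← dc, ← dc]; exact (hd.lt_iff_lt.2 (by omega)).ne')
        exact this ▸ hmS
    · exact fun h => Or.inr ⟨n, h, rfl⟩
  have ha_mono : StrictMono a := fun m n h => by
    rw [← da, ← da]; exact hd (by omega)
  have hb_mono : StrictMono b := fun m n h => by
    rw [← db, ← db]; exact hd (by omega)
  have hBI : ∀ S, BiImmune (A S) := by
    intro S
    have hRe : ∀ R : Set ℕ, REPred (· ∈ R) → R.Infinite → ∃ m, R = e m := by
      intro R h1 h2
      have : R ∈ Set.range e := he ▸ ⟨h1, h2⟩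
      obtain ⟨m, hm⟩ := this
      exact ⟨m, hm.symm⟩
    refine ⟨⟨?_, ?_⟩, ?_, ?_⟩
    · exact Set.infinite_coe_iff.1 <| by
        exact Set.infinite_coe_iff.2 <| (Set.infinite_range_of_injective ha_mono.injective).mono
          Set.subset_union_left
    · rintro R h1 h2
      obtain ⟨m, rfl⟩ := hRe R h1 h2
      exact ⟨b m, hmem_b m, hb_not S m⟩
    · exact (Set.infinite_range_of_injective hb_mono.injective).mono
        (by rintro x ⟨n, rfl⟩; exact hb_not S n)
    · rintro R h1 h2
      obtain ⟨m, rfl⟩ := hRe R h1 h2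
      refine ⟨a m, hmem_a m, ?_⟩
      rw [compl_compl]
      exact Or.inl ⟨m, rfl⟩
  -- injectivity and Cantor
  have hAinj : Function.Injective A := by
    intro S T h
    ext n
    rw [← hc_mem S n, h, hc_mem T n]
  have : Countable (Set ℕ) := by
    have : Countable {A : Set ℕ | BiImmune A} := Set.countable_coe_iff.2 hcount
    exact Function.Injective.countable (f := fun S => (⟨A S, hBI S⟩ : {A : Set ℕ | BiImmune A}))
      fun S T h => hAinj (congrArg Subtype.val h)
  obtain ⟨f, hf⟩ := countable_iff_exists_injective (Set ℕ) |>.1 this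
  exact Function.cantor_injective f hf
end
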